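/- For coprime positive integers a and b, s(a;b) = 0 if and only if a² + 1 ≡ 0 (mod b). -/

import Mathlib

open Finset Real

/-- The classical Dedekind sum `s(a;b)` defined by the cotangent sum. -/
noncomputable def dedekindS (a : ℤ) (b : ℕ) : ℝ :=
  (1 / (4 * (b : ℝ))) * ∑ ν ∈ Finset.Ico 1 b,
    Real.cot (Real.pi * a * ν / b) * Real.cot (Real.pi * ν / b)

namespace DedekindSumAux


lemma dvd_add_k0 {b : ℕ} (hb : 0 < b) (x : ℕ) : b ∣ x + (b - x % b) % b := by
  rcases Nat.eq_zero_or_pos (x % b) with h | h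
  · have hx : b ∣ x := Nat.dvd_of_mod_eq_zero h
    simpa [h, Nat.mod_self] using hx
  · have h1 : x % b < b := Nat.mod_lt _ hb
    have h2 : b - x % b < b := by omega
    rw [Nat.mod_eq_of_lt h2]
    have hdm := Nat.div_add_mod x b
    refine ⟨x / b + 1, ?_⟩
    rw [Nat.mul_add, Nat.mul_one]
    omega

lemma eq_k0_of_dvd {b : ℕ} (hb : 0 < b) {x k : ℕ} (hk : k < b) (hd : b ∣ x + k) :
    k = (b - x % b) % b := by
  have h0 : (x + k) % b = 0 := by obtain ⟨c, hc⟩ := hd; simp [hc, Nat.mul_mod_right]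
  rw [Nat.add_mod] at h0
  have hxk : x % b < b := Nat.mod_lt _ hb
  rw [Nat.mod_eq_of_lt hk] at h0
  rcases lt_or_ge (x % b + k) b with h | h
  · rw [Nat.mod_eq_of_lt h] at h0
    have hk0 : k = 0 ∧ x % b = 0 := by omega
    simp [hk0.1, hk0.2, Nat.mod_self]
  · rw [Nat.mod_eq_sub_mod h, Nat.mod_eq_of_lt (by omega)] at h0
    have hx1 : 1 ≤ x % b := by omega
    rw [Nat.mod_eq_of_lt (by omega : b - x % b < b)]
    omega

lemma six_sq (n : ℕ) : 6 * ∑ j ∈ range n, (j : ℤ)^2 = n * (n - 1) * (2 * n - 1) := by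
  induction n with
  | zero => simp
  | succ n ih =>
    rw [Finset.sum_range_succ]
    push_cast
    push_cast at ih
    linear_combination ih

lemma cancel_mod {b : ℕ} (hb : 1 < b) {u v : ℕ} (huv : u * v % b = 1) :
    ∀ j, (u * ((v * j) % b)) % b = j % b := by
  intro j
  have h1 : u * ((v * j) % b) ≡ u * (v * j) [MOD b] := (Nat.mod_modEq (v * j) b).mul_left u
  have h2 : (u * v) * j ≡ 1 * j [MOD b] :=
    Nat.ModEq.mul_right j (show (u*v) % b = 1 % b by rw [huv, Nat.mod_eq_of_lt hb])
  have h3 : u * (v * j) = (u * v) * j := by ring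
  have h4 : u * ((v * j) % b) ≡ 1 * j [MOD b] := h1.trans (h3 ▸ h2)
  have h5 : u * ((v * j) % b) % b = (1 * j) % b := h4
  simpa using h5

lemma key_bij {a b : ℕ} (hb : 1 < b) (hcop : Nat.Coprime a b) (F : ℕ → ℕ) :
    ∑ j ∈ Ico 1 b, F j = ∑ j ∈ Ico 1 b, F ((a * j) % b) := by
  obtain ⟨a', -, ha'⟩ := Nat.exists_mul_mod_eq_one_of_coprime hcop hb
  have hb0 : 0 < b := by omega
  have hcop' : Nat.Coprime a' b := by
    have h1 : Nat.gcd (a * a') b = Nat.gcd 1 b := Nat.ModEq.gcd_eq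
      (show (a*a') % b = 1 % b by rw [ha', Nat.mod_eq_of_lt hb])
    rw [Nat.gcd_one_left] at h1
    exact Nat.Coprime.coprime_dvd_left ⟨a, by ring⟩ h1
  have hmem : ∀ (c : ℕ), Nat.Coprime c b → ∀ j ∈ Ico 1 b, (c * j) % b ∈ Ico 1 b := by
    intro c hc j hj
    rw [Finset.mem_Ico] at hj ⊢
    refine ⟨?_, Nat.mod_lt _ hb0⟩
    rcases Nat.eq_zero_or_pos ((c * j) % b) with h | h
    · exfalso
      have h1 : b ∣ c * j := Nat.dvd_of_mod_eq_zero h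
      have h2 : b ∣ j := (Nat.Coprime.dvd_of_dvd_mul_left (Nat.coprime_comm.mp hc) h1)
      have := Nat.le_of_dvd (by omega) h2
      omega
    · omega
  have ha'a : a' * a % b = 1 := by rw [Nat.mul_comm]; exact ha'
  refine Finset.sum_nbij' (fun k => (a' * k) % b) (fun k => (a * k) % b)
    (hmem a' hcop') (hmem a hcop) ?_ ?_ ?_
  · intro j hj
    rw [Finset.mem_Ico] at hj
    show (a * ((a' * j) % b)) % b = j
    rw [cancel_mod hb ha', Nat.mod_eq_of_lt hj.2]
  · intro j hj
    rw [Finset.mem_Ico] at hj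
    show (a' * ((a * j) % b)) % b = j
    rw [cancel_mod hb ha'a, Nat.mod_eq_of_lt hj.2]
  · intro j hj
    rw [Finset.mem_Ico] at hj
    show F j = F ((a * ((a' * j) % b)) % b)
    rw [cancel_mod hb ha', Nat.mod_eq_of_lt hj.2]


lemma sum_Ico_one {M : Type*} [AddCommMonoid M] (b : ℕ) (hb : 0 < b) (f : ℕ → M) :
    ∑ j ∈ range b, f j = f 0 + ∑ j ∈ Ico 1 b, f j := by
  rw [Finset.range_eq_Ico, Finset.sum_eq_sum_Ico_succ_bot hb]

/-- backward direction, arithmetic form -/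
lemma four_M_eq {a b : ℕ} (hb : 1 < b) (hcop : Nat.Coprime a b)
    (hd : (b : ℤ) ∣ (a : ℤ)^2 + 1) :
    4 * (∑ j ∈ Ico 1 b, j * ((a * j) % b)) = b ^ 2 * (b - 1) := by
  have hb0 : 0 < b := by omega
  have hdN : b ∣ a ^ 2 + 1 := by
    have : ((a ^ 2 + 1 : ℕ) : ℤ) = (a : ℤ)^2 + 1 := by push_cast; ring
    exact_mod_cast (this ▸ hd : (b:ℤ) ∣ ((a^2+1 : ℕ) : ℤ))
  obtain ⟨c, hc⟩ := hdN
  have hr2 : ∀ j ∈ Ico 1 b, (a * ((a * j) % b)) % b = b - j := by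
    intro j hj
    rw [Finset.mem_Ico] at hj
    have h1 : (a * ((a * j) % b)) % b = (a * (a * j)) % b :=
      ((Nat.mod_modEq (a * j) b).mul_left a : _)
    have h2 : a * (a * j) = a ^ 2 * j := by ring
    have hdvd : b ∣ a ^ 2 * j + j := ⟨c * j, by
      have : a ^ 2 * j + j = (a ^ 2 + 1) * j := by ring
      rw [this, hc]; ring⟩
    have h3 := eq_k0_of_dvd hb0 hj.2 hdvd
    have ht : (a ^ 2 * j) % b < b := Nat.mod_lt _ hb0
    rw [h1, h2]
    rcases Nat.eq_zero_or_pos ((a ^ 2 * j) % b) with h | h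
    · exfalso; rw [h, Nat.sub_zero, Nat.mod_self] at h3; omega
    · rw [Nat.mod_eq_of_lt (by omega : b - (a ^ 2 * j) % b < b)] at h3; omega
  have hbij := key_bij hb hcop (F := fun t => t * ((a * t) % b))
  have h2 : ∑ j ∈ Ico 1 b, j * ((a * j) % b)
      = ∑ j ∈ Ico 1 b, ((a * j) % b) * (b - j) := by
    rw [hbij]
    refine Finset.sum_congr rfl fun j hj => ?_
    rw [hr2 j hj]
  have h4 : ∑ j ∈ Ico 1 b, ((a * j) % b) = ∑ j ∈ Ico 1 b, j :=
    (key_bij hb hcop (F := fun t => t)).symm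
  have h3 : (∑ j ∈ Ico 1 b, j * ((a * j) % b)) + (∑ j ∈ Ico 1 b, j * ((a * j) % b))
      = b * ∑ j ∈ Ico 1 b, j := by
    nth_rewrite 1 [h2]
    rw [← Finset.sum_add_distrib, ← h4, Finset.mul_sum]
    refine Finset.sum_congr rfl fun j hj => ?_
    rw [Finset.mem_Ico] at hj
    have : (b - j) + j = b := by omega
    calc ((a * j) % b) * (b - j) + j * ((a * j) % b)
        = ((a * j) % b) * ((b - j) + j) := by ring
      _ = b * ((a * j) % b) := by rw [this]; ring
  have h5 : (∑ j ∈ Ico 1 b, j) * 2 = b * (b - 1) := by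
    have := Finset.sum_range_id_mul_two b
    have heq : ∑ j ∈ range b, j = ∑ j ∈ Ico 1 b, j := by
      rw [sum_Ico_one b hb0]; simp
    rw [← heq]; exact this
  calc 4 * (∑ j ∈ Ico 1 b, j * ((a * j) % b))
      = 2 * ((∑ j ∈ Ico 1 b, j * ((a * j) % b)) + (∑ j ∈ Ico 1 b, j * ((a * j) % b))) := by ring
    _ = b * ((∑ j ∈ Ico 1 b, j) * 2) := by rw [h3]; ring
    _ = b ^ 2 * (b - 1) := by rw [h5, pow_two]; ring

/-- forward direction, arithmetic form -/
lemma dvd_of_four_M {a b : ℕ} (hb : 1 < b) (hcop : Nat.Coprime a b)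
    (h4M : 4 * (∑ j ∈ Ico 1 b, j * ((a * j) % b)) = b ^ 2 * (b - 1)) :
    (b : ℤ) ∣ (a : ℤ)^2 + 1 := by
  have hb0 : 0 < b := by omega
  set f : ℕ → ℕ := fun j => a * j / b with hf
  set S2 : ℤ := ∑ j ∈ Ico 1 b, (j : ℤ)^2 with hS2
  set N : ℤ := ∑ j ∈ Ico 1 b, (j : ℤ) * (f j : ℤ) with hN
  set F2 : ℤ := ∑ j ∈ Ico 1 b, (f j : ℤ)^2 with hF2
  have hmod : ∀ j : ℕ, (((a * j) % b : ℕ) : ℤ) = (a : ℤ) * j - (b : ℤ) * (f j : ℤ) := by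
    intro j
    have := Nat.div_add_mod (a * j) b
    have h' : (b : ℤ) * (f j : ℤ) + (((a * j) % b : ℕ) : ℤ) = (a : ℤ) * j := by
      exact_mod_cast congrArg (Nat.cast : ℕ → ℤ) this
    linarith
  have h6S2 : 6 * S2 = (b : ℤ) * ((b : ℤ) - 1) * (2 * (b : ℤ) - 1) := by
    have h1 := six_sq b
    have h2 : ∑ j ∈ range b, (j : ℤ)^2 = S2 := by
      rw [sum_Ico_one b hb0]; norm_num; rfl
    rw [h2] at h1
    exact h1
  have hsq : ∑ j ∈ Ico 1 b, (((a * j) % b : ℕ) : ℤ)^2 = S2 := by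
    have h1 := key_bij hb hcop (F := fun t => t * t)
    have h2 : ((∑ j ∈ Ico 1 b, j * j : ℕ) : ℤ) = ((∑ j ∈ Ico 1 b, ((a*j)%b) * ((a*j)%b) : ℕ) : ℤ) := by
      exact_mod_cast congrArg (Nat.cast : ℕ → ℤ) h1
    push_cast at h2
    rw [hS2]
    calc ∑ j ∈ Ico 1 b, (((a * j) % b : ℕ) : ℤ)^2
        = ∑ j ∈ Ico 1 b, (((a * j) % b : ℕ) : ℤ) * (((a * j) % b : ℕ) : ℤ) := by
          refine Finset.sum_congr rfl fun j _ => by ring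
      _ = ∑ j ∈ Ico 1 b, (j : ℤ) * (j : ℤ) := h2.symm
      _ = ∑ j ∈ Ico 1 b, (j : ℤ)^2 := by
          refine Finset.sum_congr rfl fun j _ => by ring
  have E1 : (a:ℤ)^2 * S2 - 2*(a:ℤ)*(b:ℤ)*N + (b:ℤ)^2*F2 = S2 := by
    calc (a:ℤ)^2 * S2 - 2*(a:ℤ)*(b:ℤ)*N + (b:ℤ)^2*F2
        = ∑ j ∈ Ico 1 b, ((a:ℤ)^2 * (j:ℤ)^2 - 2*(a:ℤ)*(b:ℤ)*((j:ℤ)*(f j:ℤ)) + (b:ℤ)^2*(f j:ℤ)^2) := by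
          rw [Finset.sum_add_distrib, Finset.sum_sub_distrib, ← Finset.mul_sum, ← Finset.mul_sum,
            ← Finset.mul_sum, hS2, hN, hF2]
      _ = ∑ j ∈ Ico 1 b, (((a * j) % b : ℕ) : ℤ)^2 := by
          refine Finset.sum_congr rfl fun j _ => ?_
          rw [hmod j]; ring
      _ = S2 := hsq
  have EM : ((∑ j ∈ Ico 1 b, j * ((a * j) % b) : ℕ) : ℤ) = (a:ℤ)*S2 - (b:ℤ)*N := by
    push_cast
    calc ∑ j ∈ Ico 1 b, (j:ℤ) * (((a * j) % b : ℕ) : ℤ)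
        = ∑ j ∈ Ico 1 b, ((a:ℤ)*(j:ℤ)^2 - (b:ℤ)*((j:ℤ)*(f j:ℤ))) := by
          refine Finset.sum_congr rfl fun j _ => ?_
          rw [hmod j]; ring
      _ = (a:ℤ)*S2 - (b:ℤ)*N := by
          rw [Finset.sum_sub_distrib, ← Finset.mul_sum, ← Finset.mul_sum, hS2, hN]
  have E2 : 4 * ((∑ j ∈ Ico 1 b, j * ((a * j) % b) : ℕ) : ℤ) = (b:ℤ)^2 * ((b:ℤ) - 1) := by
    have := congrArg (Nat.cast : ℕ → ℤ) h4M
    push_cast [Nat.cast_sub (by omega : (1:ℕ) ≤ b)] at this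
    exact_mod_cast this
  have key : 2*((a:ℤ)^2+1)*S2 = (a:ℤ)*(b:ℤ)^2*((b:ℤ)-1) + 2*(b:ℤ)^2*F2 := by
    linear_combination (-2 : ℤ) * E1 + (a:ℤ) * E2 - 4*(a:ℤ)*EM
  have hbne : (b:ℤ) ≠ 0 := by exact_mod_cast hb0.ne'
  have E4 : ((a:ℤ)^2+1) * (((b:ℤ)-1)*(2*(b:ℤ)-1)) = (b:ℤ) * (3*(a:ℤ)*((b:ℤ)-1) + 6*F2) := by
    apply mul_left_cancel₀ hbne
    linear_combination 3 * key - ((a:ℤ)^2+1) * h6S2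
  exact ⟨3*(a:ℤ)*((b:ℤ)-1) + 6*F2 - ((a:ℤ)^2+1)*(2*(b:ℤ)-3), by linear_combination E4⟩

section Zeta
variable {b : ℕ} (hb : 0 < b)

noncomputable def zeta (b : ℕ) : ℂ := Complex.exp (2 * (π : ℂ) * Complex.I / b)

include hb

lemma hzeta : IsPrimitiveRoot (zeta b) b := Complex.isPrimitiveRoot_exp b hb.ne'

lemma zeta_pow_eq_one_iff (m : ℕ) : zeta b ^ m = 1 ↔ b ∣ m :=
  (hzeta hb).pow_eq_one_iff_dvd m

lemma zeta_pow_b (m : ℕ) : (zeta b ^ m) ^ b = 1 := by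
  rw [← pow_mul, mul_comm, pow_mul, (hzeta hb).pow_eq_one, one_pow]

lemma geo (m : ℕ) : ∑ ν ∈ range b, (zeta b ^ m) ^ ν = if b ∣ m then (b : ℂ) else 0 := by
  by_cases hm : b ∣ m
  · rw [if_pos hm, (zeta_pow_eq_one_iff hb m).mpr hm]
    simp
  · rw [if_neg hm]
    have hx1 : zeta b ^ m ≠ 1 := fun h => hm ((zeta_pow_eq_one_iff hb m).mp h)
    rw [geom_sum_eq hx1, zeta_pow_b hb m]
    simp

lemma geoIco (m : ℕ) :
    ∑ ν ∈ Ico 1 b, (zeta b ^ m) ^ ν = (if b ∣ m then (b : ℂ) else 0) - 1 := by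
  have h := sum_Ico_one b hb (fun ν => (zeta b ^ m) ^ ν)
  rw [geo hb m] at h
  simp only [pow_zero] at h
  linear_combination -h

lemma fourier {x : ℂ} (hxb : x ^ b = 1) (hx1 : x ≠ 1) :
    (x - 1) * ∑ j ∈ range b, (j : ℂ) * x ^ j = b := by
  have hgeo : ∑ j ∈ range b, x ^ j = 0 := by
    rw [geom_sum_eq hx1, hxb]; simp
  have h2 : ∑ j ∈ range b, ((x - 1) * ((j : ℂ) * x ^ j) + x * x ^ j) = (b : ℂ) := by
    calc ∑ j ∈ range b, ((x - 1) * ((j : ℂ) * x ^ j) + x * x ^ j)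
        = ∑ j ∈ range b, (((j + 1 : ℕ) : ℂ) * x ^ (j + 1) - ((j : ℕ) : ℂ) * x ^ j) := by
          refine Finset.sum_congr rfl fun j _ => ?_
          push_cast; ring
      _ = ((b : ℕ) : ℂ) * x ^ b - ((0 : ℕ) : ℂ) * x ^ 0 := Finset.sum_range_sub (fun j => ((j : ℕ) : ℂ) * x ^ j) b
      _ = b := by rw [hxb]; simp
  rw [Finset.sum_add_distrib, ← Finset.mul_sum, ← Finset.mul_sum, hgeo, mul_zero, add_zero] at h2
  exact h2

lemma cotform (m : ℕ) (hm : ¬ b ∣ m) :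
    ((Real.cot (π * m / b) : ℝ) : ℂ)
      = Complex.I * (1 + 2 / b * ∑ j ∈ range b, (j : ℂ) * (zeta b ^ m) ^ j) := by
  have hbC : (b : ℂ) ≠ 0 := by exact_mod_cast hb.ne'
  set x : ℂ := zeta b ^ m with hxdef
  have hx1 : x ≠ 1 := fun h => hm ((zeta_pow_eq_one_iff hb m).mp h)
  have hxb : x ^ b = 1 := zeta_pow_b hb m
  have hx1' : x - 1 ≠ 0 := sub_ne_zero.mpr hx1
  have hfou := fourier hb hxb hx1
  set θ : ℝ := π * m / b with hθdef
  set u : ℂ := Complex.exp (θ * Complex.I) with hudef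
  have hu0 : u ≠ 0 := Complex.exp_ne_zero _
  have huinv : Complex.exp (-(θ : ℂ) * Complex.I) = u⁻¹ := by
    rw [neg_mul, Complex.exp_neg]
  have hu2 : u ^ 2 = x := by
    rw [hudef, sq, ← Complex.exp_add, hxdef, zeta, ← Complex.exp_nat_mul]
    congr 1
    push_cast [hθdef]
    field_simp
    ring
  have h2c : 2 * Complex.cos (θ : ℂ) = u + u⁻¹ := by
    rw [Complex.two_cos, huinv]
  have h2s : 2 * Complex.sin (θ : ℂ) = (u⁻¹ - u) * Complex.I := by
    rw [Complex.two_sin, huinv]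
  have hui : u * u⁻¹ = 1 := mul_inv_cancel₀ hu0
  clear_value x u
  have hsin : Complex.sin (θ : ℂ) ≠ 0 := by
    intro h0
    apply hx1
    rw [← hu2]
    have h1 : (u⁻¹ - u) * Complex.I = 0 := by rw [← h2s, h0, mul_zero]
    have h2 : u⁻¹ - u = 0 := by
      rcases mul_eq_zero.mp h1 with h | h
      · exact h
      · exact absurd h Complex.I_ne_zero
    have h3 : u⁻¹ = u := by linear_combination h2
    rw [sq]
    nth_rewrite 2 [← h3]
    exact hui
  have hS : ∑ j ∈ range b, (j : ℂ) * x ^ j = (b : ℂ) / (x - 1) := by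
    rw [eq_div_iff hx1']
    linear_combination hfou
  rw [Complex.ofReal_cot, Complex.cot_eq_cos_div_sin, hS, div_eq_iff hsin]
  have hcos : Complex.cos (θ : ℂ) = (u + u⁻¹) / 2 := by linear_combination h2c / 2
  have hsin' : Complex.sin (θ : ℂ) = (u⁻¹ - u) * Complex.I / 2 := by linear_combination h2s / 2
  rw [hcos, hsin', ← hu2]
  have hu21 : u ^ 2 - 1 ≠ 0 := by
    intro h
    apply hx1
    rw [← hu2]
    linear_combination h
  field_simp
  ring_nf
  rw [Complex.I_sq]
  field_simp
  ring


lemma sumP (c : ℕ) (hc : Nat.Coprime c b) :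
    ∑ ν ∈ Ico 1 b, ∑ j ∈ range b, (j : ℂ) * (zeta b ^ (c * ν)) ^ j
      = -∑ j ∈ range b, (j : ℂ) := by
  rw [Finset.sum_comm]
  calc ∑ j ∈ range b, ∑ ν ∈ Ico 1 b, (j : ℂ) * (zeta b ^ (c * ν)) ^ j
      = ∑ j ∈ range b, (j : ℂ) * ((if b ∣ j * c then (b : ℂ) else 0) - 1) := by
        refine Finset.sum_congr rfl fun j _ => ?_
        rw [← Finset.mul_sum]
        congr 1
        calc ∑ ν ∈ Ico 1 b, (zeta b ^ (c * ν)) ^ j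
            = ∑ ν ∈ Ico 1 b, (zeta b ^ (j * c)) ^ ν := by
              refine Finset.sum_congr rfl fun ν _ => ?_
              rw [← pow_mul, ← pow_mul]
              congr 1
              ring
          _ = _ := geoIco hb (j * c)
    _ = ∑ j ∈ range b, -(j : ℂ) := by
        refine Finset.sum_congr rfl fun j hj => ?_
        rcases Nat.eq_zero_or_pos j with h0 | h0
        · simp [h0]
        · rw [if_neg fun hd : b ∣ j * c => by
            have h1 : b ∣ j := Nat.Coprime.dvd_of_dvd_mul_right hc.symm hd
            have h2 := Nat.le_of_dvd h0 h1
            rw [Finset.mem_range] at hj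
            omega]
          ring
    _ = -∑ j ∈ range b, (j : ℂ) := by rw [Finset.sum_neg_distrib]

lemma inner_k (j a : ℕ) :
    ∑ k ∈ range b, ((j : ℂ) * (k : ℂ)) * (if b ∣ j * a + k then (b : ℂ) else 0)
      = (j : ℂ) * (((b - (j * a) % b) % b : ℕ) : ℂ) * b := by
  rw [Finset.sum_eq_single ((b - (j * a) % b) % b)]
  · rw [if_pos (dvd_add_k0 hb (j * a))]
  · intro k hk hne
    rw [if_neg fun hd => hne (eq_k0_of_dvd hb (Finset.mem_range.mp hk) hd), mul_zero]
  · intro h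
    exact absurd (Finset.mem_range.mpr (Nat.mod_lt _ hb)) h

lemma sumPQ (a : ℕ) :
    ∑ ν ∈ Ico 1 b, ((∑ j ∈ range b, (j : ℂ) * (zeta b ^ (a * ν)) ^ j)
        * (∑ j ∈ range b, (j : ℂ) * (zeta b ^ ν) ^ j))
      = (b : ℂ) * ((∑ j ∈ range b, j * ((b - (j * a) % b) % b) : ℕ) : ℂ)
        - (∑ j ∈ range b, (j : ℂ)) ^ 2 := by
  calc ∑ ν ∈ Ico 1 b, ((∑ j ∈ range b, (j : ℂ) * (zeta b ^ (a * ν)) ^ j)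
        * (∑ j ∈ range b, (j : ℂ) * (zeta b ^ ν) ^ j))
      = ∑ ν ∈ Ico 1 b, ∑ j ∈ range b, ∑ k ∈ range b,
          ((j : ℂ) * (k : ℂ)) * (zeta b ^ (j * a + k)) ^ ν := by
        refine Finset.sum_congr rfl fun ν _ => ?_
        rw [Finset.sum_mul_sum]
        refine Finset.sum_congr rfl fun j _ => Finset.sum_congr rfl fun k _ => ?_
        have hexp : (zeta b ^ (a * ν)) ^ j * (zeta b ^ ν) ^ k = (zeta b ^ (j * a + k)) ^ ν := by
          rw [← pow_mul, ← pow_mul, ← pow_add, ← pow_mul]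
          congr 1
          ring
        calc ((j : ℂ) * (zeta b ^ (a * ν)) ^ j) * ((k : ℂ) * (zeta b ^ ν) ^ k)
            = ((j : ℂ) * (k : ℂ)) * ((zeta b ^ (a * ν)) ^ j * (zeta b ^ ν) ^ k) := by ring
          _ = ((j : ℂ) * (k : ℂ)) * (zeta b ^ (j * a + k)) ^ ν := by rw [hexp]
    _ = ∑ j ∈ range b, ∑ k ∈ range b,
          ((j : ℂ) * (k : ℂ)) * ((if b ∣ j * a + k then (b : ℂ) else 0) - 1) := by
        rw [Finset.sum_comm]
        refine Finset.sum_congr rfl fun j _ => ?_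
        rw [Finset.sum_comm]
        refine Finset.sum_congr rfl fun k _ => ?_
        rw [← Finset.mul_sum, geoIco hb (j * a + k)]
    _ = ∑ j ∈ range b, ((j : ℂ) * (((b - (j * a) % b) % b : ℕ) : ℂ) * b
          - (j : ℂ) * ∑ k ∈ range b, (k : ℂ)) := by
        refine Finset.sum_congr rfl fun j _ => ?_
        calc ∑ k ∈ range b, ((j : ℂ) * (k : ℂ)) * ((if b ∣ j * a + k then (b : ℂ) else 0) - 1)
            = ∑ k ∈ range b, (((j : ℂ) * (k : ℂ)) * (if b ∣ j * a + k then (b : ℂ) else 0)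
                - (j : ℂ) * (k : ℂ)) := by
              refine Finset.sum_congr rfl fun k _ => by ring
          _ = (∑ k ∈ range b, ((j : ℂ) * (k : ℂ)) * (if b ∣ j * a + k then (b : ℂ) else 0))
                - ∑ k ∈ range b, (j : ℂ) * (k : ℂ) := Finset.sum_sub_distrib _ _
          _ = (j : ℂ) * (((b - (j * a) % b) % b : ℕ) : ℂ) * b
                - (j : ℂ) * ∑ k ∈ range b, (k : ℂ) := by
              rw [inner_k hb, Finset.mul_sum]
    _ = (b : ℂ) * ((∑ j ∈ range b, j * ((b - (j * a) % b) % b) : ℕ) : ℂ)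
        - (∑ j ∈ range b, (j : ℂ)) ^ 2 := by
        rw [Finset.sum_sub_distrib]
        congr 1
        · push_cast
          rw [Finset.mul_sum]
          refine Finset.sum_congr rfl fun j _ => by ring
        · rw [← Finset.sum_mul, sq]

lemma cot_sum {a : ℕ} (hcop : Nat.Coprime a b) :
    (∑ ν ∈ Ico 1 b, Real.cot (π * a * ν / b) * Real.cot (π * ν / b)) * (b : ℝ)
      = 4 * ((∑ j ∈ Ico 1 b, j * ((a * j) % b) : ℕ) : ℝ) - (b : ℝ)^2 * ((b : ℝ) - 1) := by
  have hbC : (b : ℂ) ≠ 0 := by exact_mod_cast hb.ne'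
  have hKM : (∑ j ∈ range b, j * ((b - (j * a) % b) % b)) + (∑ j ∈ Ico 1 b, j * ((a * j) % b))
      = b * ∑ j ∈ range b, j := by
    have h1 : ∑ j ∈ range b, j * ((a * j) % b) = ∑ j ∈ Ico 1 b, j * ((a * j) % b) := by
      rw [sum_Ico_one b hb]; simp
    rw [← h1, ← Finset.sum_add_distrib, Finset.mul_sum]
    refine Finset.sum_congr rfl fun j hj => ?_
    rcases Nat.eq_zero_or_pos j with h0 | h0
    · simp [h0]
    · have hj2 := Finset.mem_range.mp hj
      have hr0 : (j * a) % b ≠ 0 := by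
        intro h
        have hd : b ∣ j * a := Nat.dvd_of_mod_eq_zero h
        have hd1 : b ∣ j := Nat.Coprime.dvd_of_dvd_mul_right hcop.symm hd
        have := Nat.le_of_dvd h0 hd1
        omega
      have hrlt : (j * a) % b < b := Nat.mod_lt _ hb
      have hacomm : (a * j) % b = (j * a) % b := by rw [Nat.mul_comm]
      rw [hacomm, Nat.mod_eq_of_lt (show b - (j * a) % b < b by omega), ← Nat.mul_add]
      have hsum : (b - (j * a) % b) + (j * a) % b = b := by omega
      rw [hsum, Nat.mul_comm]
  have hG2 : (∑ j ∈ range b, (j : ℂ)) * 2 = (b : ℂ) * ((b : ℂ) - 1) := by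
    have h := congrArg (Nat.cast : ℕ → ℂ) (Finset.sum_range_id_mul_two b)
    push_cast [Nat.cast_sub (show 1 ≤ b by omega)] at h
    exact_mod_cast h
  have main : (∑ ν ∈ Ico 1 b, ((Real.cot (π * a * ν / b) * Real.cot (π * ν / b) : ℝ) : ℂ)) * (b : ℂ)
      = 4 * ((∑ j ∈ Ico 1 b, j * ((a * j) % b) : ℕ) : ℂ) - (b : ℂ)^2 * ((b : ℂ) - 1) := by
    have hterm : ∀ ν ∈ Ico 1 b, ((Real.cot (π * a * ν / b) * Real.cot (π * ν / b) : ℝ) : ℂ)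
        = -(1 + 2/(b : ℂ) * ∑ j ∈ range b, (j : ℂ) * (zeta b ^ (a * ν)) ^ j
            + 2/(b : ℂ) * ∑ j ∈ range b, (j : ℂ) * (zeta b ^ ν) ^ j
            + 4/(b : ℂ)^2 * ((∑ j ∈ range b, (j : ℂ) * (zeta b ^ (a * ν)) ^ j)
                * (∑ j ∈ range b, (j : ℂ) * (zeta b ^ ν) ^ j))) := by
      intro ν hν
      rw [Finset.mem_Ico] at hν
      have hν1 : ¬ b ∣ ν := fun hd => by have := Nat.le_of_dvd (by omega) hd; omega
      have hν2 : ¬ b ∣ a * ν := fun hd => by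
        have h1 : b ∣ ν := Nat.Coprime.dvd_of_dvd_mul_left hcop.symm hd
        have := Nat.le_of_dvd (by omega) h1
        omega
      have harg : π * (a : ℝ) * ν / b = π * ((a * ν : ℕ) : ℝ) / b := by push_cast; ring
      rw [Complex.ofReal_mul, harg, cotform hb (a * ν) hν2, cotform hb ν hν1]
      set S1 := ∑ j ∈ range b, (j : ℂ) * (zeta b ^ (a * ν)) ^ j with hS1
      set S2 := ∑ j ∈ range b, (j : ℂ) * (zeta b ^ ν) ^ j with hS2
      calc Complex.I * (1 + 2/(b : ℂ) * S1) * (Complex.I * (1 + 2/(b : ℂ) * S2))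
          = (Complex.I * Complex.I) * ((1 + 2/(b : ℂ) * S1) * (1 + 2/(b : ℂ) * S2)) := by ring
        _ = -(1 + 2/(b : ℂ) * S1 + 2/(b : ℂ) * S2 + 4/(b : ℂ)^2 * (S1 * S2)) := by
            rw [Complex.I_mul_I]
            field_simp
            ring
    rw [Finset.sum_congr rfl hterm, Finset.sum_neg_distrib, Finset.sum_add_distrib,
      Finset.sum_add_distrib, Finset.sum_add_distrib, ← Finset.mul_sum, ← Finset.mul_sum,
      ← Finset.mul_sum, Finset.sum_const, Nat.card_Ico, nsmul_eq_mul, mul_one]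
    have hQ : ∑ ν ∈ Ico 1 b, ∑ j ∈ range b, (j : ℂ) * (zeta b ^ ν) ^ j
        = -∑ j ∈ range b, (j : ℂ) := by
      have h := sumP hb 1 (Nat.coprime_one_left b)
      simpa using h
    rw [sumP hb a hcop, hQ, sumPQ hb a]
    have hb1 : ((b - 1 : ℕ) : ℂ) = (b : ℂ) - 1 := by
      rw [Nat.cast_sub (show 1 ≤ b by omega), Nat.cast_one]
    have hKC : ((∑ j ∈ range b, j * ((b - (j * a) % b) % b) : ℕ) : ℂ)
        = (b : ℂ) * (∑ j ∈ range b, (j : ℂ))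
          - ((∑ j ∈ Ico 1 b, j * ((a * j) % b) : ℕ) : ℂ) := by
      have h := congrArg (Nat.cast : ℕ → ℂ) hKM
      push_cast at h ⊢
      linear_combination h
    rw [hb1, hKC]
    have hGv : (∑ j ∈ range b, (j : ℂ)) = (b : ℂ) * ((b : ℂ) - 1) / 2 := by
      linear_combination hG2 / 2
    rw [hGv]
    field_simp
    ring
  apply Complex.ofReal_injective
  push_cast at main ⊢
  exact main

end Zeta

end DedekindSumAux

theorem dedekindS_eq_zero_iff (a b : ℕ) (ha : 0 < a) (hb : 0 < b) (hcop : Nat.gcd a b = 1) :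
    dedekindS a b = 0 ↔ (b : ℤ) ∣ (a : ℤ) ^ 2 + 1 := by
  classical
  by_cases hb1 : b = 1
  · subst hb1
    simp [dedekindS]
  have hbb : 1 < b := by omega
  have hcop' : Nat.Coprime a b := hcop
  have hbR : (0 : ℝ) < b := by exact_mod_cast hb
  have hsum := DedekindSumAux.cot_sum hb hcop'
  have hded : dedekindS a b
      = (1 / (4 * (b : ℝ))) * ∑ ν ∈ Finset.Ico 1 b,
          Real.cot (π * (a : ℝ) * ν / b) * Real.cot (π * ν / b) := by
    unfold dedekindS
    norm_num
  have hne : (1 / (4 * (b : ℝ))) ≠ 0 := by positivity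
  rw [hded, mul_eq_zero]
  have hiff1 : (∑ ν ∈ Finset.Ico 1 b, Real.cot (π * (a : ℝ) * ν / b) * Real.cot (π * ν / b)) = 0
      ↔ 4 * ((∑ j ∈ Ico 1 b, j * ((a * j) % b) : ℕ) : ℝ) - (b : ℝ)^2 * ((b : ℝ) - 1) = 0 := by
    constructor
    · intro h
      rw [← hsum, h, zero_mul]
    · intro h
      have h2 : (∑ ν ∈ Finset.Ico 1 b, Real.cot (π * (a : ℝ) * ν / b) * Real.cot (π * ν / b))
          * (b : ℝ) = 0 := by rw [hsum, h]
      rcases mul_eq_zero.mp h2 with h3 | h3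
      · exact h3
      · exact absurd h3 hbR.ne'
  have hcast : ((b ^ 2 * (b - 1) : ℕ) : ℝ) = (b : ℝ)^2 * ((b : ℝ) - 1) := by
    push_cast [Nat.cast_sub (show 1 ≤ b by omega)]
    ring
  have hiff2 : 4 * ((∑ j ∈ Ico 1 b, j * ((a * j) % b) : ℕ) : ℝ) - (b : ℝ)^2 * ((b : ℝ) - 1) = 0
      ↔ 4 * (∑ j ∈ Ico 1 b, j * ((a * j) % b)) = b ^ 2 * (b - 1) := by
    rw [sub_eq_zero, ← hcast]
    exact ⟨fun h => by exact_mod_cast h, fun h => by exact_mod_cast h⟩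
  constructor
  · intro h
    rcases h with h | h
    · exact absurd h hne
    · exact DedekindSumAux.dvd_of_four_M hbb hcop' (hiff2.mp (hiff1.mp h))
  · intro h
    right
    exact hiff1.mpr (hiff2.mpr (DedekindSumAux.four_M_eq hbb hcop' h))
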